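/- arXiv:2603.10348 — 2 statements merged into one kernel-verified Lean document; each statement's English description precedes it below -/
import Mathlib

section
/- Let K ≥ 2, θ > 0, β > 0, ε ≥ 0, and let π : Fin K → ℝ with π_k > 0 for all k and Σ_k π_k = 1, and define p_k(π) = (θ·π_k^{-β} + ε) / Σ_{j=1}^{K} (θ·π_j^{-β} + ε). If index k satisfies π_k ≥ π_j for all j and π_k > 1/K, then p_k(π) < π_k (so dπ_k/dt = p_k(π) - π_k < 0); dually, if π_k ≤ π_j for all j and π_k < 1/K, then p_k(π) > π_k. Hence the drift pushes the largest over-represented group down and the smallest under-represented group up. -/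
theorem drift_pushes_toward_uniform (K : ℕ) (hK : 2 ≤ K) (θ β ε : ℝ)
    (hθ : 0 < θ) (hβ : 0 < β) (hε : 0 ≤ ε)
    (π : Fin K → ℝ) (hπ : ∀ k, 0 < π k) (hsum : ∑ k : Fin K, π k = 1) (k : Fin K) :
    ((∀ j : Fin K, π j ≤ π k) → 1 / K < π k →
        (θ * π k ^ (-β) + ε) / (∑ j : Fin K, (θ * π j ^ (-β) + ε)) < π k) ∧
    ((∀ j : Fin K, π k ≤ π j) → π k < 1 / K →
        π k < (θ * π k ^ (-β) + ε) / (∑ j : Fin K, (θ * π j ^ (-β) + ε))) := by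
  set f : Fin K → ℝ := fun j => θ * π j ^ (-β) + ε with hf
  have hβneg : (-β) < 0 := neg_neg_of_pos hβ
  have hfpos : ∀ j, 0 < f j := fun j =>
    add_pos_of_pos_of_nonneg (mul_pos hθ (Real.rpow_pos_of_pos (hπ j) _)) hε
  have hfle : ∀ i j : Fin K, π i ≤ π j → f j ≤ f i := fun i j h =>
    add_le_add_left (mul_le_mul_of_nonneg_left
      (Real.rpow_le_rpow_of_nonpos (hπ i) h hβneg.le) hθ.le) _
  have hflt : ∀ i j : Fin K, π i < π j → f j < f i := fun i j h =>
    add_lt_add_left (mul_lt_mul_of_pos_left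
      (Real.rpow_lt_rpow_of_neg (hπ i) h hβneg) hθ) _
  have hKpos : (0 : ℝ) < K := by positivity
  have hSpos : 0 < ∑ j : Fin K, f j :=
    Finset.sum_pos (fun j _ => hfpos j) ⟨k, Finset.mem_univ k⟩
  constructor
  · intro hmax hover
    rw [div_lt_iff₀ hSpos]
    -- f k = ∑ j π j * f k  <  ∑ j π k * f j = π k * S
    have hexists : ∃ j : Fin K, π j < π k := by
      by_contra h
      push_neg at h
      have heq : ∀ j : Fin K, π j = π k := fun j => le_antisymm (hmax j) (h j)
      have : ∑ j : Fin K, π j = K * π k := by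
        rw [Finset.sum_congr rfl (fun j _ => heq j)]
        simp [mul_comm]
      rw [hsum] at this
      have : π k = 1 / K := by field_simp at this ⊢; linarith
      rw [this] at hover; exact lt_irrefl _ hover
    obtain ⟨j₀, hj₀⟩ := hexists
    calc f k = ∑ j : Fin K, π j * f k := by
          rw [← Finset.sum_mul, hsum, one_mul]
      _ < ∑ j : Fin K, π k * f j := by
          apply Finset.sum_lt_sum
          · intro i _
            calc π i * f k ≤ π k * f k :=
                  mul_le_mul_of_nonneg_right (hmax i) (hfpos k).le
              _ ≤ π k * f i := mul_le_mul_of_nonneg_left (hfle i k (hmax i)) (hπ k).le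
          · exact ⟨j₀, Finset.mem_univ j₀, by
              calc π j₀ * f k < π k * f k :=
                    mul_lt_mul_of_pos_right hj₀ (hfpos k)
                _ ≤ π k * f j₀ := mul_le_mul_of_nonneg_left (hfle j₀ k hj₀.le) (hπ k).le⟩
      _ = π k * ∑ j : Fin K, f j := by rw [Finset.mul_sum]
  · intro hmin hunder
    rw [lt_div_iff₀ hSpos]
    have hexists : ∃ j : Fin K, π k < π j := by
      by_contra h
      push_neg at h
      have heq : ∀ j : Fin K, π j = π k := fun j => le_antisymm (h j) (hmin j)
      have : ∑ j : Fin K, π j = K * π k := by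
        rw [Finset.sum_congr rfl (fun j _ => heq j)]
        simp [mul_comm]
      rw [hsum] at this
      have : π k = 1 / K := by field_simp at this ⊢; linarith
      rw [this] at hunder; exact lt_irrefl _ hunder
    obtain ⟨j₀, hj₀⟩ := hexists
    calc π k * ∑ j : Fin K, f j = ∑ j : Fin K, π k * f j := by rw [Finset.mul_sum]
      _ < ∑ j : Fin K, π j * f k := by
          apply Finset.sum_lt_sum
          · intro i _
            calc π k * f i ≤ π k * f k :=
                  mul_le_mul_of_nonneg_left (hfle k i (hmin i)) (hπ k).le
              _ ≤ π i * f k := mul_le_mul_of_nonneg_right (hmin i) (hfpos k).le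
          · exact ⟨j₀, Finset.mem_univ j₀, by
              calc π k * f j₀ ≤ π k * f k :=
                    mul_le_mul_of_nonneg_left (hfle k j₀ hj₀.le) (hπ k).le
                _ < π j₀ * f k := mul_lt_mul_of_pos_right hj₀ (hfpos k)⟩
      _ = f k := by rw [← Finset.sum_mul, hsum, one_mul]
end

section
/- Let K ≥ 1, θ > 0, β > 0, ε > 0, and N₀ ≥ 1. Define p_k(π) = (θ·π_k^{-β} + ε)/Σ_{j=1}^{K}(θ·π_j^{-β} + ε), and let the sequence π(t) in ℝ^K evolve by π_k(t+1) = π_k(t) + (p_k(π(t)) - π_k(t))/(N₀ + t + 1), starting from any π(0) with π_k(0) > 0 for all k and Σ_k π_k(0) = 1. Then for every k, π_k(t) → 1/K as t → ∞: under symmetric bias the group proportions converge to the uniform distribution. -/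
open Filter

/-- If `u * v ≤ 0` (opposite signs), then `|u + v| ≤ max |u| |v|`. -/
lemma abs_add_le_max_of_mul_nonpos (u v : ℝ) (h : u * v ≤ 0) :
    |u + v| ≤ max |u| |v| := by
  rw [abs_le]
  constructor
  · rcases le_or_gt 0 v with hv | hv
    · linarith [neg_abs_le u, le_max_left |u| |v|]
    · have hu : 0 ≤ u := by nlinarith
      linarith [neg_abs_le v, le_max_right |u| |v|]
  · rcases le_or_gt v 0 with hv | hv
    · linarith [le_abs_self u, le_max_left |u| |v|]
    · have hu : u ≤ 0 := by nlinarith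
      linarith [le_abs_self v, le_max_right |u| |v|]

theorem symmetric_bias_converges_to_uniform (K : ℕ) (hK : 1 ≤ K) (θ β ε N₀ : ℝ)
    (hθ : 0 < θ) (hβ : 0 < β) (hε : 0 < ε) (hN₀ : 1 ≤ N₀)
    (π : ℕ → Fin K → ℝ)
    (hπ0pos : ∀ k, 0 < π 0 k) (hπ0sum : ∑ k : Fin K, π 0 k = 1)
    (hrec : ∀ t : ℕ, ∀ k : Fin K,
      π (t + 1) k = π t k +
        ((θ * π t k ^ (-β) + ε) / (∑ j : Fin K, (θ * π t j ^ (-β) + ε)) - π t k) /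
          (N₀ + t + 1)) :
    ∀ k : Fin K, Tendsto (fun t : ℕ => π t k) atTop (nhds (1 / K)) := by
  have hKpos : 0 < K := hK
  haveI : NeZero K := ⟨by omega⟩
  have hne : (Finset.univ : Finset (Fin K)).Nonempty := Finset.univ_nonempty
  have hKR : (0:ℝ) < (K:ℝ) := by exact_mod_cast hKpos
  -- basic invariants: positivity and sum = 1
  have key : ∀ t, (∀ k, 0 < π t k) ∧ (∑ k : Fin K, π t k = 1) := by
    intro t
    induction t with
    | zero => exact ⟨hπ0pos, hπ0sum⟩
    | succ t ih =>
      obtain ⟨hpos, hsum⟩ := ih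
      have hS : 0 < ∑ j : Fin K, (θ * π t j ^ (-β) + ε) := by
        apply Finset.sum_pos _ hne
        intro j _
        have := Real.rpow_pos_of_pos (hpos j) (-β)
        positivity
      have hM2 : (2:ℝ) ≤ N₀ + t + 1 := by
        have : (0:ℝ) ≤ (t:ℝ) := Nat.cast_nonneg t
        linarith
      have hMpos : (0:ℝ) < N₀ + t + 1 := by linarith
      have hppos : ∀ k, 0 < (θ * π t k ^ (-β) + ε) /
          (∑ j : Fin K, (θ * π t j ^ (-β) + ε)) := by
        intro k
        apply div_pos _ hS
        have := Real.rpow_pos_of_pos (hpos k) (-β)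
        positivity
      constructor
      · intro k
        rw [hrec t k]
        set q := (θ * π t k ^ (-β) + ε) / (∑ j : Fin K, (θ * π t j ^ (-β) + ε)) with hq
        have h1 : π t k + (q - π t k) / (N₀ + t + 1) =
            ((N₀ + t) * π t k + q) / (N₀ + t + 1) := by
          field_simp
          ring
        rw [h1]
        apply div_pos _ hMpos
        have h2 := hpos k
        have h3 := hppos k
        rw [← hq] at h3
        nlinarith
      · have hpsum : ∑ k : Fin K, (θ * π t k ^ (-β) + ε) /
            (∑ j : Fin K, (θ * π t j ^ (-β) + ε)) = 1 := by
          rw [← Finset.sum_div, div_self hS.ne']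
        calc ∑ k : Fin K, π (t+1) k
            = ∑ k : Fin K, (π t k + ((θ * π t k ^ (-β) + ε) /
                (∑ j : Fin K, (θ * π t j ^ (-β) + ε)) - π t k) / (N₀ + t + 1)) :=
              Finset.sum_congr rfl (fun k _ => hrec t k)
          _ = (∑ k : Fin K, π t k) + ((∑ k : Fin K, ((θ * π t k ^ (-β) + ε) /
                (∑ j : Fin K, (θ * π t j ^ (-β) + ε)) - π t k))) / (N₀ + t + 1) := by
              rw [Finset.sum_add_distrib, ← Finset.sum_div]
          _ = 1 + (1 - 1) / (N₀ + t + 1) := by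
              rw [hsum, Finset.sum_sub_distrib, hpsum, hsum]
          _ = 1 := by simp
  -- pairwise differences shrink like N₀ / (N₀ + t)
  have hdiff : ∀ t, ∀ k j : Fin K, |π t k - π t j| ≤ N₀ / (N₀ + t) := by
    intro t
    induction t with
    | zero =>
      intro k j
      have h1 : π 0 k ≤ 1 := by
        rw [← hπ0sum]
        exact Finset.single_le_sum (fun i _ => (hπ0pos i).le) (Finset.mem_univ k)
      have h2 : π 0 j ≤ 1 := by
        rw [← hπ0sum]
        exact Finset.single_le_sum (fun i _ => (hπ0pos i).le) (Finset.mem_univ j)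
      have hN0 : N₀ / (N₀ + ((0:ℕ):ℝ)) = 1 := by
        rw [Nat.cast_zero, add_zero, div_self (by linarith)]
      rw [hN0, abs_sub_le_iff]
      constructor
      · linarith [hπ0pos j]
      · linarith [hπ0pos k]
    | succ t ih =>
      intro k j
      obtain ⟨hpos, hsum⟩ := key t
      have hS : 0 < ∑ i : Fin K, (θ * π t i ^ (-β) + ε) := by
        apply Finset.sum_pos _ hne
        intro i _
        have := Real.rpow_pos_of_pos (hpos i) (-β)
        positivity
      set S := ∑ i : Fin K, (θ * π t i ^ (-β) + ε) with hSdef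
      set p : Fin K → ℝ := fun i => (θ * π t i ^ (-β) + ε) / S with hp
      have hp01 : ∀ i, 0 ≤ p i ∧ p i ≤ 1 := by
        intro i
        have hnum : 0 < θ * π t i ^ (-β) + ε := by
          have := Real.rpow_pos_of_pos (hpos i) (-β)
          positivity
        constructor
        · exact (div_pos hnum hS).le
        · rw [hp]
          simp only
          rw [div_le_one hS, hSdef]
          exact Finset.single_le_sum
            (f := fun i => θ * π t i ^ (-β) + ε)
            (fun i _ => by
              have := Real.rpow_pos_of_pos (hpos i) (-β); positivity)
            (Finset.mem_univ i)
      -- opposite signs of π-difference and p-difference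
      have hsign : (π t k - π t j) * (p k - p j) ≤ 0 := by
        have hanti : ∀ x y : ℝ, 0 < x → x ≤ y → y ^ (-β) ≤ x ^ (-β) :=
          fun x y hx hxy => Real.rpow_le_rpow_of_nonpos hx hxy (by linarith)
        have hpkj : p k - p j = θ * (π t k ^ (-β) - π t j ^ (-β)) / S := by
          rw [hp]
          simp only
          field_simp
          ring
        rw [hpkj]
        rcases le_total (π t k) (π t j) with h | h
        · apply mul_nonpos_iff.mpr
          right
          refine ⟨by linarith, ?_⟩
          have := hanti _ _ (hpos k) h
          exact div_nonneg (mul_nonneg hθ.le (by linarith)) hS.le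
        · apply mul_nonpos_iff.mpr
          left
          refine ⟨by linarith, ?_⟩
          have := hanti _ _ (hpos j) h
          apply div_nonpos_of_nonpos_of_nonneg _ hS.le
          nlinarith
      set M : ℝ := N₀ + t + 1 with hMdef
      have hM2 : (2:ℝ) ≤ M := by
        have : (0:ℝ) ≤ (t:ℝ) := Nat.cast_nonneg t
        rw [hMdef]; linarith
      have hMpos : (0:ℝ) < M := by linarith
      have hM1 : (1:ℝ) ≤ M - 1 := by linarith
      have heq : π (t+1) k - π (t+1) j
          = (π t k - π t j) * ((M - 1)/M) + (p k - p j) * (1/M) := by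
        rw [hrec t k, hrec t j, ← hSdef, hp]
        simp only
        rw [hMdef]
        field_simp
        ring
      have habs : |π (t+1) k - π (t+1) j| ≤
          max (|π t k - π t j| * ((M-1)/M)) (|p k - p j| * (1/M)) := by
        rw [heq]
        have hmul : ((π t k - π t j) * ((M - 1)/M)) * ((p k - p j) * (1/M)) ≤ 0 := by
          have h1 : ((π t k - π t j) * ((M - 1)/M)) * ((p k - p j) * (1/M))
              = ((π t k - π t j) * (p k - p j)) * ((M-1)/(M*M)) := by
            field_simp
          rw [h1]
          apply mul_nonpos_iff.mpr
          right
          exact ⟨hsign, div_nonneg (by linarith) (by positivity)⟩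
        have h2 := abs_add_le_max_of_mul_nonpos _ _ hmul
        rw [abs_mul, abs_mul, abs_of_nonneg (by positivity : (0:ℝ) ≤ (M-1)/M),
          abs_of_nonneg (by positivity : (0:ℝ) ≤ 1/M)] at h2
        exact h2
      have hΔ : |π t k - π t j| ≤ N₀ / (M - 1) := by
        have h := ih k j
        have : N₀ / (N₀ + (t:ℝ)) = N₀ / (M - 1) := by rw [hMdef]; ring_nf
        linarith [this ▸ h]
      have hδ : |p k - p j| ≤ 1 := by
        obtain ⟨h1, h2⟩ := hp01 k
        obtain ⟨h3, h4⟩ := hp01 j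
        rw [abs_sub_le_iff]
        constructor <;> linarith
      have hgoal : N₀ / (N₀ + ((t+1 : ℕ):ℝ)) = N₀ / M := by
        rw [hMdef]; push_cast; ring_nf
      rw [hgoal]
      apply le_trans habs
      apply max_le
      · have h1 : |π t k - π t j| * ((M-1)/M) ≤ (N₀ / (M-1)) * ((M-1)/M) := by
          apply mul_le_mul_of_nonneg_right hΔ
          positivity
        have h2 : (N₀ / (M-1)) * ((M-1)/M) = N₀ / M := by
          field_simp
        linarith
      · have h1 : |p k - p j| * (1/M) ≤ 1 * (1/M) := by
          apply mul_le_mul_of_nonneg_right hδ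
          positivity
        have h2 : 1 * (1/M) ≤ N₀ / M := by
          rw [one_mul]
          apply div_le_div_of_nonneg_right hN₀ hMpos.le
        linarith
  -- conclude: each coordinate is within N₀/(N₀+t) of 1/K
  intro k
  have hbound : ∀ t : ℕ, |π t k - 1/K| ≤ N₀ / (N₀ + t) := by
    intro t
    obtain ⟨hpos, hsum⟩ := key t
    have h1 : π t k - 1/K = (∑ j : Fin K, (π t k - π t j)) / K := by
      rw [Finset.sum_sub_distrib, hsum, Finset.sum_const, Finset.card_univ,
        Fintype.card_fin, nsmul_eq_mul]
      field_simp
    rw [h1, abs_div, abs_of_pos hKR]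
    have h2 : |∑ j : Fin K, (π t k - π t j)| ≤ ∑ j : Fin K, |π t k - π t j| :=
      Finset.abs_sum_le_sum_abs _ _
    have h3 : ∑ j : Fin K, |π t k - π t j| ≤ ∑ _j : Fin K, N₀ / (N₀ + t) :=
      Finset.sum_le_sum (fun j _ => hdiff t k j)
    have h4 : (∑ _j : Fin K, N₀ / (N₀ + (t:ℝ))) = K * (N₀ / (N₀ + t)) := by
      rw [Finset.sum_const, Finset.card_univ, Fintype.card_fin, nsmul_eq_mul]
    have h5 : |∑ j : Fin K, (π t k - π t j)| / (K:ℝ) ≤ (K * (N₀ / (N₀ + t))) / K := by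
      apply div_le_div_of_nonneg_right _ hKR.le  -- might need adjusting
      linarith
    have h6 : ((K:ℝ) * (N₀ / (N₀ + t))) / K = N₀ / (N₀ + t) := by
      field_simp
    linarith
  have h0 : Tendsto (fun t : ℕ => N₀ / (N₀ + (t:ℝ))) atTop (nhds 0) :=
    Tendsto.div_atTop tendsto_const_nhds
      (tendsto_atTop_add_const_left _ _ tendsto_natCast_atTop_atTop)
  have hsq : Tendsto (fun t : ℕ => π t k - 1/K) atTop (nhds 0) :=
    squeeze_zero_norm (fun t => by rw [Real.norm_eq_abs]; exact hbound t) h0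
  exact tendsto_sub_nhds_zero_iff.mp hsq
end
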